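/- arXiv:1101.5071 — 3 statements merged into one kernel-verified Lean document; each statement's English description precedes it below -/
import Mathlib

section
/- Let d ≥ 3 be odd and λ a strict partition. Then the number of bar lengths of λ divisible by d equals |q̄_d(λ)|/d, i.e. d times the number of bars of length divisible by d equals the size of the d̄-quotient partition. -/
namespace BarPartitions

/-- A strict (bar) partition given as a strictly decreasing list of positive integers. -/
def IsStrictList (l : List ℕ) : Prop := l.Chain' (· > ·) ∧ ∀ a ∈ l, 0 < a

/-- The multiset of bar lengths of a strict partition `l = (a₁ > ... > a_m)`:
`⋃ᵢ ({1,…,aᵢ} ∪ {aᵢ + aⱼ : j > i}) \ {aᵢ - aⱼ : j > i}` as multisets. -/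
def barMultisetL (l : List ℕ) : Multiset ℕ :=
  ((List.range l.length).map (fun i =>
      ((Multiset.range (l.getD i 0)).map (· + 1))
      + ((l.drop (i + 1)).map (fun b => l.getD i 0 + b) : Multiset ℕ))).sum
  - ((List.range l.length).map (fun i =>
      ((l.drop (i + 1)).map (fun b => l.getD i 0 - b) : Multiset ℕ))).sum

/-- The doubled partition `D(λ)` with Frobenius coordinates `(a₁,…,a_m | a₁-1,…,a_m-1)`:
row `i` (0-indexed, `i < m`) has `aᵢ + i + 1` cells; the remaining rows are given by the
column lengths `c + a_c` (0-indexed column `c < m`). -/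
def doubledP (l : List ℕ) : List ℕ :=
  (List.range l.length).map (fun i => l.getD i 0 + i + 1) ++
  (List.range (l.headD 0 - l.length)).map (fun k =>
    ((List.range l.length).filter (fun c => l.length + k + 1 ≤ c + l.getD c 0)).length)

/-- Length of column `c` of the Young diagram of the partition `μ` (list of parts). -/
def colLen (μ : List ℕ) (c : ℕ) : ℕ := (μ.filter (fun p => c < p)).length

/-- Hook length of the cell `(r, c)` (0-indexed) of the partition `μ`. -/
def hookLen (μ : List ℕ) (r c : ℕ) : ℕ := (μ.getD r 0 - c) + (colLen μ c - r) - 1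

/-- The multiset of hook lengths of the partition `μ`. -/
def hookLengths (μ : List ℕ) : Multiset ℕ :=
  ((List.range μ.length).map (fun r =>
    ((Multiset.range (μ.getD r 0)).map (fun c => hookLen μ r c)))).sum

/-- d-residue of the hand node of any hook in row `r` of `μ`. -/
def handRes (d : ℕ) (μ : List ℕ) (r : ℕ) : ZMod d :=
  (((μ.getD r 0 : ℤ) - 1 - (r : ℤ) : ℤ) : ZMod d)

/-- d-residue of the foot node of any hook in column `c` of `μ`. -/
def footRes (d : ℕ) (μ : List ℕ) (c : ℕ) : ZMod d :=
  (((c : ℤ) - (colLen μ c : ℤ) + 1 : ℤ) : ZMod d)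

/-- The β-set of `μ` with `N` elements (first-column hook lengths, padded with `0` parts). -/
def betaList (μ : List ℕ) (N : ℕ) : List ℕ :=
  (List.range N).map (fun k => μ.getD k 0 + (N - 1 - k))

/-- The least multiple of `d` that is `≥ len`. -/
def minMul (d len : ℕ) : ℕ := d * ((len + d - 1) / d)

/-- Number of beads on runner `i` of the minimally normalized `d`-abacus of `μ`. -/
def beadCountL (d : ℕ) (μ : List ℕ) (i : ℕ) : ℕ :=
  ((betaList μ (minMul d μ.length)).filter (fun v => v % d = i)).length

/-! ### Finset versions: a strict partition as its finite set of (positive) parts. -/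

/-- The parts of a strict partition, sorted decreasingly. -/
def sortedParts (s : Finset ℕ) : List ℕ := (s.sort (· ≤ ·)).reverse

/-- Bead counts of the minimally normalized `d`-abacus of the doubled partition `D(λ)`,
where `λ` is the strict partition with part set `s` (as integers). -/
def beadCount (d : ℕ) (s : Finset ℕ) (i : ℕ) : ℤ :=
  (beadCountL d (doubledP (sortedParts s)) i : ℤ)

/-- The multiset of bar lengths of the strict partition with (positive) part set `s`. -/
def barMultisetF (s : Finset ℕ) : Multiset ℕ :=
  s.val.bind (fun a => ((Multiset.range a).map (· + 1)).filter (fun h => a - h ∉ s))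
  + s.val.bind (fun a => (s.filter (fun b => b < a)).val.map (fun b => a + b))

/-- Removal of one bar of length `h` from the strict partition `s`, yielding `t`:
either remove two parts `a ≠ b` with `a + b = h`, or replace a part `a` by `a - h`
(deleting it when `h = a`), provided `a - h` is not already a part. -/
def RemoveBarLen (h : ℕ) (s t : Finset ℕ) : Prop :=
  (∃ a ∈ s, ∃ b ∈ s, a ≠ b ∧ h = a + b ∧ t = (s.erase a).erase b) ∨
  (∃ a ∈ s, 0 < h ∧ h ≤ a ∧ a - h ∉ s ∧
    t = if h = a then s.erase a else insert (a - h) (s.erase a))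

/-- Removal of one bar of length divisible by `d`. -/
def RemoveDBar (d : ℕ) (s t : Finset ℕ) : Prop := ∃ h, d ∣ h ∧ RemoveBarLen h s t

/-- `c` is the `d̄`-core of `s`: obtained from `s` by removing bars of length divisible
by `d`, and admitting no further such removal. -/
def IsBarCore (d : ℕ) (s c : Finset ℕ) : Prop :=
  Relation.ReflTransGen (RemoveDBar d) s c ∧ ∀ t, ¬ RemoveDBar d c t

/-- The partition (multiset of positive parts) associated to a β-set `X`. -/
def partitionOfBetaSet (X : Finset ℕ) : Multiset ℕ :=
  (((X.sort (· ≤ ·)).zipIdx.map (fun p => p.1 - p.2) : List ℕ) : Multiset ℕ).filter (fun v => 0 < v)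

/-- Positions of the parts of `s` lying on runner `i` of the `d`-abacus. -/
def runnerSet (d i : ℕ) (s : Finset ℕ) : Finset ℕ :=
  (s.filter (fun a => a % d = i)).image (fun a => a / d)

/-- The `i`-th component (`1 ≤ i ≤ (d-1)/2`) of the `d̄`-quotient of `s`: the partition
determined by the pair of runners `(i, d - i)` via the associated charged β-set. -/
def barQuotComp (d i : ℕ) (s : Finset ℕ) : Multiset ℕ :=
  let A := runnerSet d i s
  let B := runnerSet d (d - i) s
  let N := B.sup id + 1
  partitionOfBetaSet
    ((A.image (fun a => N + a)) ∪ ((Finset.range N).filter (fun b => b ∉ B)).image (fun b => N - 1 - b))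

/-- Two strict partitions have the same `d̄`-quotient. -/
def SameBarQuotient (d : ℕ) (s t : Finset ℕ) : Prop :=
  runnerSet d 0 s = runnerSet d 0 t ∧
  ∀ i, 1 ≤ i → i ≤ (d - 1) / 2 → barQuotComp d i s = barQuotComp d i t

/-- `q` is the `d̄`-quotient partition of `s`: the unique strict partition with empty
`d̄`-core and the same `d̄`-quotient as `s`. -/
def IsBarQuotientPartition (d : ℕ) (s q : Finset ℕ) : Prop :=
  IsBarCore d q ∅ ∧ SameBarQuotient d s q

/-- The set of modified part lengths: a part `p ≡ i (mod d)` is modified to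
`|p + d(xᵢ - x₀)|`. -/
def modParts (d : ℕ) (x : ℕ → ℤ) (q : Finset ℕ) : Finset ℕ :=
  q.image (fun (p : ℕ) => ((p : ℤ) + (d : ℤ) * (x (p % d) - x 0)).natAbs)

/-- The multiset of modified bar lengths: a bar of length `h` corresponding to a bead
on runner `i` and an empty spot on runner `j` is modified to `|h + d(xᵢ - xⱼ)|`. -/
def modBarLengths (d : ℕ) (x : ℕ → ℤ) (q : Finset ℕ) : Multiset ℕ :=
  q.val.bind (fun a =>
    (((Multiset.range a).map (· + 1)).filter (fun h => a - h ∉ q)).map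
      (fun (h : ℕ) => ((h : ℤ) + (d : ℤ) * (x (a % d) - x ((a - h) % d))).natAbs))
  + q.val.bind (fun a =>
      (q.filter (fun b => b < a)).val.map
        (fun (b : ℕ) => (((a : ℤ) + (b : ℤ)) + (d : ℤ) * (x (a % d) - x ((d - b % d) % d))).natAbs))

open Finset

lemma two_choose (k : ℕ) : 2 * k.choose 2 + k = k * k := by
  induction k with
  | zero => rfl
  | succ n ih =>
    rw [Nat.choose_succ_succ, Nat.choose_one_right]
    nlinarith

/-- size of the partition whose β-set is `X` -/
def psize (X : Finset ℕ) : ℕ := ∑ x ∈ X, (x - (X.filter (· < x)).card)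

lemma lowcard_le (X : Finset ℕ) (x : ℕ) : (X.filter (· < x)).card ≤ x := by
  calc (X.filter (· < x)).card ≤ (range x).card := by
        apply card_le_card; intro y hy
        simp only [mem_filter] at hy; simpa using hy.2
    _ = x := card_range x

lemma lowsum (X : Finset ℕ) : ∑ x ∈ X, (X.filter (· < x)).card = X.card.choose 2 := by
  induction X using Finset.induction_on_max with
  | empty => simp
  | insert a X ha ih =>
    have haX : a ∉ X := fun h => lt_irrefl a (ha a h)
    rw [sum_insert haX]
    have h1 : ((insert a X).filter (· < a)) = X := by
      ext y; simp only [mem_filter, mem_insert]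
      constructor
      · rintro ⟨h | h, hlt⟩
        · omega
        · exact h
      · intro hy; exact ⟨Or.inr hy, ha y hy⟩
    have h2 : ∀ x ∈ X, ((insert a X).filter (· < x)) = X.filter (· < x) := by
      intro x hx; ext y; simp only [mem_filter, mem_insert]
      have := ha x hx
      constructor
      · rintro ⟨h | h, hlt⟩ <;> [omega; exact ⟨h, hlt⟩]
      · intro hy; exact ⟨Or.inr hy.1, hy.2⟩
    rw [h1, sum_congr rfl (fun x hx => by rw [h2 x hx]), ih,
      card_insert_of_notMem haX, Nat.choose_succ_succ, Nat.choose_one_right, Nat.add_comm]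

lemma psize_add (X : Finset ℕ) : psize X + X.card.choose 2 = ∑ x ∈ X, x := by
  rw [psize, ← lowsum X, ← sum_add_distrib]
  exact sum_congr rfl fun x _ => Nat.sub_add_cancel (lowcard_le X x)
variable {d : ℕ}

lemma decomp_mod (hd0 : 0 < d) {i : ℕ} (hi : i < d) (y : ℕ) : (i + d * y) % d = i := by
  rw [Nat.add_mul_mod_self_left, Nat.mod_eq_of_lt hi]

lemma decomp_div (hd0 : 0 < d) {i : ℕ} (hi : i < d) (y : ℕ) : (i + d * y) / d = y := by
  rw [Nat.add_mul_div_left _ _ hd0, Nat.div_eq_of_lt hi, Nat.zero_add]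

lemma mem_runnerSet (hd0 : 0 < d) {i : ℕ} (hi : i < d) (t : Finset ℕ) (y : ℕ) :
    y ∈ runnerSet d i t ↔ i + d * y ∈ t := by
  simp only [runnerSet, mem_image, mem_filter]
  constructor
  · rintro ⟨a, ⟨hat, hai⟩, hay⟩
    have : a = i + d * y := by rw [← hai, ← hay, Nat.mod_add_div a d]
    rwa [← this]
  · intro h
    exact ⟨i + d * y, ⟨h, decomp_mod hd0 hi y⟩, decomp_div hd0 hi y⟩

lemma sum_runner (hd0 : 0 < d) (t : Finset ℕ) (g : ℕ → ℕ) :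
    ∑ a ∈ t, g a = ∑ i ∈ range d, ∑ x ∈ runnerSet d i t, g (i + d * x) := by
  rw [← Finset.sum_fiberwise_of_maps_to (g := fun a => a % d) (t := range d)
    (fun a _ => mem_range.2 (Nat.mod_lt a hd0)) g]
  refine sum_congr rfl fun i hi => ?_
  have hi' : i < d := mem_range.1 hi
  rw [runnerSet, sum_image]
  · refine sum_congr rfl fun a ha => ?_
    simp only [mem_filter] at ha
    rw [← ha.2, Nat.mod_add_div a d]
  · intro a ha b hb hab
    simp only [mem_coe, mem_filter] at ha hb
    have hab' : a / d = b / d := hab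
    have : a % d + d * (a/d) = b % d + d * (b/d) := by rw [ha.2, hb.2, hab']
    rwa [Nat.mod_add_div, Nat.mod_add_div] at this

lemma card_runnerSet (t : Finset ℕ) (i : ℕ) :
    (runnerSet d i t).card = (t.filter (fun a => a % d = i)).card := by
  rw [runnerSet, card_image_of_injOn]
  intro a ha b hb hab
  simp only [coe_filter, Set.mem_setOf_eq] at ha hb
  have hab' : a / d = b / d := hab
  have : a % d + d * (a/d) = b % d + d * (b/d) := by rw [ha.2, hb.2, hab']
  rwa [Nat.mod_add_div, Nat.mod_add_div] at this

lemma respair (hd0 : 0 < d) {a b : ℕ} :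
    d ∣ (a + b) ↔ b % d = (d - a % d) % d := by
  have ha := Nat.mod_lt a hd0
  have hb := Nat.mod_lt b hd0
  have hda : a % d + d * (a / d) = a := Nat.mod_add_div a d
  have hdb : b % d + d * (b / d) = b := Nat.mod_add_div b d
  have hmod : (a + b) % d = (a % d + b % d) % d := by rw [Nat.add_mod]
  have hdvd : d ∣ (a + b) ↔ (a % d + b % d) % d = 0 := by
    rw [Nat.dvd_iff_mod_eq_zero, hmod]
  have hsum : (a % d + b % d) % d = 0 ↔ (a % d + b % d = 0 ∨ a % d + b % d = d) := by
    rcases lt_or_ge (a % d + b % d) d with hlt | hge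
    · rw [Nat.mod_eq_of_lt hlt]; omega
    · rw [Nat.mod_eq_sub_mod hge, Nat.mod_eq_of_lt (by omega)]; omega
  rw [hdvd, hsum]
  rcases Nat.eq_zero_or_pos (a % d) with h0 | h0
  · rw [h0, Nat.sub_zero, Nat.mod_self]; omega
  · rw [Nat.mod_eq_of_lt (by omega : d - a % d < d)]; omega
/-- number of parts of `t` with residue `i` mod `d` -/
def nres (d i : ℕ) (t : Finset ℕ) : ℕ := (t.filter (fun a => a % d = i)).card

lemma nres_erase {t : Finset ℕ} {a : ℕ} (ha : a ∈ t) (i : ℕ) :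
    (nres d i (t.erase a) : ℤ) = nres d i t - (if a % d = i then 1 else 0) := by
  unfold nres
  rw [filter_erase]
  by_cases h : a % d = i
  · have hmem : a ∈ t.filter (fun a => a % d = i) := mem_filter.2 ⟨ha, h⟩
    rw [card_erase_of_mem hmem, if_pos h]
    have hpos : 0 < (t.filter (fun a => a % d = i)).card := card_pos.2 ⟨a, hmem⟩
    push_cast [Nat.cast_sub hpos]
    ring
  · rw [Finset.erase_eq_of_notMem (by simp [h] : a ∉ Finset.filter (fun a => a % d = i) t),
      if_neg h]
    push_cast; ring

lemma nres_insert {t : Finset ℕ} {a : ℕ} (ha : a ∉ t) (i : ℕ) :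
    (nres d i (insert a t) : ℤ) = nres d i t + (if a % d = i then 1 else 0) := by
  unfold nres
  rw [filter_insert]
  by_cases h : a % d = i
  · rw [if_pos h, card_insert_of_notMem (fun hmem => ha (mem_filter.1 hmem).1), if_pos h]
    push_cast; ring
  · rw [if_neg h, if_neg h]; push_cast; ring

lemma sub_mod_eq {h a : ℕ} (hdvd : d ∣ h) (hle : h ≤ a) : (a - h) % d = a % d := by
  obtain ⟨c, hc⟩ := hdvd
  conv_rhs => rw [← Nat.sub_add_cancel hle]
  rw [hc, Nat.add_mul_mod_self_left]

lemma invar_step (hd0 : 0 < d) (hodd : Odd d) {u v : Finset ℕ} (h : RemoveDBar d u v)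
    {i : ℕ} (h1 : 1 ≤ i) (h2 : i ≤ (d - 1) / 2) :
    (nres d i v : ℤ) - nres d (d - i) v = (nres d i u : ℤ) - nres d (d - i) u := by
  obtain ⟨m, hm⟩ := hodd
  have hi : i < d := by omega
  have hinej : i ≠ d - i := by omega
  obtain ⟨h, hdvd, hrem⟩ := h
  rcases hrem with ⟨a, ha, b, hb, hab, hhab, hv⟩ | ⟨a, ha, hpos, hle, hnot, hv⟩
  · subst hv
    have hba : b ∈ u.erase a := mem_erase.2 ⟨fun hh => hab hh.symm, hb⟩
    have hdab : d ∣ a + b := hhab ▸ hdvd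
    have hres : b % d = (d - a % d) % d := (respair hd0).1 hdab
    have hamod := Nat.mod_lt a hd0
    have hbmod := Nat.mod_lt b hd0
    rw [nres_erase hba, nres_erase hba, nres_erase ha, nres_erase ha]
    have key : ((if a % d = i then (1:ℤ) else 0) + (if b % d = i then 1 else 0))
        = ((if a % d = d - i then (1:ℤ) else 0) + (if b % d = d - i then 1 else 0)) := by
      rcases Nat.eq_zero_or_pos (a % d) with h0 | h0
      · rw [h0, Nat.sub_zero, Nat.mod_self] at hres
        rw [h0, hres]
        have hI : ¬ ((0:ℕ) = i) := by omega
        have hJ : ¬ ((0:ℕ) = d - i) := by omega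
        rw [if_neg hI, if_neg hJ]
      · rw [Nat.mod_eq_of_lt (by omega : d - a % d < d)] at hres
        by_cases hai : a % d = i
        · have hbj : b % d = d - i := by omega
          have hbi : ¬ (b % d = i) := by omega
          have haj : ¬ (a % d = d - i) := by omega
          rw [if_pos hai, if_neg hbi, if_neg haj, if_pos hbj]; ring
        · by_cases haj : a % d = d - i
          · have hbi : b % d = i := by omega
            have hbj : ¬ (b % d = d - i) := by omega
            rw [if_neg hai, if_pos hbi, if_pos haj, if_neg hbj]; ring
          · have hbi : ¬ (b % d = i) := by omega
            have hbj : ¬ (b % d = d - i) := by omega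
            rw [if_neg hai, if_neg hbi, if_neg haj, if_neg hbj]
    linarith [key]
  · by_cases hha : h = a
    · rw [hv, if_pos hha]
      have hamod : a % d = 0 := by
        obtain ⟨c, hc⟩ := hha ▸ hdvd
        rw [hc, Nat.mul_mod_right]
      rw [nres_erase ha, nres_erase ha]
      have hI : ¬ (a % d = i) := by omega
      have hJ : ¬ (a % d = d - i) := by omega
      rw [if_neg hI, if_neg hJ]
      ring
    · rw [hv, if_neg hha]
      have hne : a - h ∉ u.erase a := fun hmem => hnot (mem_of_mem_erase hmem)
      rw [nres_insert hne, nres_insert hne, nres_erase ha, nres_erase ha,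
        sub_mod_eq hdvd hle]
      ring

lemma invar_chain (hd0 : 0 < d) (hodd : Odd d) {u v : Finset ℕ}
    (h : Relation.ReflTransGen (RemoveDBar d) u v)
    {i : ℕ} (h1 : 1 ≤ i) (h2 : i ≤ (d - 1) / 2) :
    (nres d i v : ℤ) - nres d (d - i) v = (nres d i u : ℤ) - nres d (d - i) u := by
  induction h with
  | refl => rfl
  | tail _ hstep ih => rw [invar_step hd0 hodd hstep h1 h2, ih]
lemma sum_range_id' (n : ℕ) : ∑ i ∈ range n, i = n.choose 2 := by
  induction n with
  | zero => rfl
  | succ k ih => rw [Finset.sum_range_succ, ih, Nat.choose_succ_succ, Nat.choose_one_right,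
      Nat.add_comm]

lemma enumFrom_sub_sum : ∀ (l : List ℕ) (k : ℕ), l.Pairwise (· < ·) → (∀ x ∈ l, k ≤ x) →
    ((l.zipIdx k).map (fun p => p.1 - p.2)).sum + (l.length * k + l.length.choose 2) = l.sum
  | [], k, _, _ => by simp
  | a :: l', k, hsort, hk => by
    have hsort' : l'.Pairwise (· < ·) := (List.pairwise_cons.1 hsort).2
    have halt : ∀ x ∈ l', a < x := (List.pairwise_cons.1 hsort).1
    have hka : k ≤ a := hk a List.mem_cons_self
    have hk' : ∀ x ∈ l', k + 1 ≤ x := fun x hx => by have := halt x hx; omega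
    have ih := enumFrom_sub_sum l' (k + 1) hsort' hk'
    simp only [List.zipIdx_cons, List.map_cons, List.sum_cons, List.length_cons]
    have hch : (l'.length + 1).choose 2 = l'.length.choose 2 + l'.length := by
      rw [Nat.choose_succ_succ, Nat.choose_one_right, Nat.add_comm]
    have hmul : l'.length * (k + 1) = l'.length * k + l'.length := by ring
    have hmul2 : (l'.length + 1) * k = l'.length * k + k := by ring
    omega

lemma filter_pos_sum (m : Multiset ℕ) : (m.filter (fun v => 0 < v)).sum = m.sum := by
  conv_rhs => rw [← Multiset.filter_add_not (fun v => 0 < v) m]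
  rw [Multiset.sum_add]
  have : (m.filter (fun v => ¬ 0 < v)).sum = 0 := by
    apply Multiset.sum_eq_zero
    intro x hx
    have := (Multiset.mem_filter.1 hx).2
    omega
  omega

lemma pbs_sum (Y : Finset ℕ) : (partitionOfBetaSet Y).sum + Y.card.choose 2 = ∑ y ∈ Y, y := by
  unfold partitionOfBetaSet
  rw [filter_pos_sum]
  have hsort := (Finset.sortedLT_sort Y).pairwise
  have hlen : (Y.sort (· ≤ ·)).length = Y.card := Finset.length_sort _
  have hsum : (Y.sort (· ≤ ·)).sum = ∑ y ∈ Y, y := by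
    have : ((Y.sort (· ≤ ·) : List ℕ) : Multiset ℕ) = Y.val := Finset.sort_eq Y _
    calc (Y.sort (· ≤ ·)).sum = ((Y.sort (· ≤ ·) : List ℕ) : Multiset ℕ).sum := by
          rw [Multiset.sum_coe]
      _ = Y.val.sum := by rw [this]
      _ = ∑ y ∈ Y, y := by rw [Finset.sum]; simp
  have key := enumFrom_sub_sum (Y.sort (· ≤ ·)) 0 hsort (fun x _ => Nat.zero_le x)
  rw [Multiset.sum_coe]
  rw [hlen] at key
  omega

set_option maxHeartbeats 1000000 in
lemma union_beta_sum (A B : Finset ℕ) (N : ℕ) (hN : 1 ≤ N) (hB : ∀ b ∈ B, b < N) :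
    (partitionOfBetaSet
      ((A.image (fun a => N + a)) ∪ ((range N).filter (fun b => b ∉ B)).image (fun b => N - 1 - b))).sum
      = psize A + psize B + A.card * B.card := by
  set L := A.image (fun a => N + a) with hL
  set R := ((range N).filter (fun b => b ∉ B)).image (fun b => N - 1 - b) with hR
  have hdisj : Disjoint L R := by
    rw [Finset.disjoint_left]
    intro y hyL hyR
    rw [hL, mem_image] at hyL
    rw [hR, mem_image] at hyR
    obtain ⟨a, _, ha⟩ := hyL
    obtain ⟨b, hb, hbeq⟩ := hyR
    omega
  have hBsub : B ⊆ range N := fun b hb => mem_range.2 (hB b hb)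
  have hfilt : (range N).filter (fun b => b ∈ B) = B := by
    ext b; simp only [mem_filter, mem_range]
    exact ⟨fun h => h.2, fun h => ⟨hB b h, h⟩⟩
  have hcardsplit : ((range N).filter (fun b => b ∉ B)).card + B.card = N := by
    have := Finset.card_filter_add_card_filter_not (s := range N)
      (p := fun b => b ∈ B)
    rw [hfilt, card_range] at this
    omega
  have hinjR : Set.InjOn (fun b => N - 1 - b) ((range N).filter (fun b => b ∉ B)) := by
    intro x hx y hy hxy
    simp only [coe_filter, Set.mem_setOf_eq, mem_range] at hx hy
    simp only at hxy
    omega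
  have hcardL : L.card = A.card := card_image_of_injective _ (fun x y h => by omega)
  have hcardR : R.card = N - B.card := by
    rw [hR, card_image_of_injOn hinjR]; omega
  have hsumL : ∑ y ∈ L, y = N * A.card + ∑ a ∈ A, a := by
    rw [hL, sum_image (fun x _ y _ h => by omega)]
    rw [Finset.sum_add_distrib, Finset.sum_const, smul_eq_mul]
    ring
  have hsumRfull : ∑ b ∈ range N, (N - 1 - b) = N.choose 2 := by
    rw [Finset.sum_range_reflect (fun b => b) N]
    exact sum_range_id' N
  have hsplit : ∑ b ∈ (range N).filter (fun b => b ∉ B), (N - 1 - b)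
      + ∑ b ∈ B, (N - 1 - b) = N.choose 2 := by
    rw [← hsumRfull]
    have h2 : (range N).filter (fun b => ¬ b ∉ B) = B := by
      ext b
      simp only [mem_filter, mem_range, not_not]
      exact ⟨fun h => h.2, fun h => ⟨hB b h, h⟩⟩
    have h3 := Finset.sum_filter_add_sum_filter_not (range N) (fun b => b ∉ B)
      (fun b => N - 1 - b)
    rw [h2] at h3
    exact h3
  have hsumR : ∑ y ∈ R, y = ∑ b ∈ (range N).filter (fun b => b ∉ B), (N - 1 - b) := by
    rw [hR]
    apply sum_image
    intro x hx y hy hxy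
    simp only [mem_coe, mem_filter, mem_range] at hx hy hxy
    omega
  have hBsum : ∑ b ∈ B, (N - 1 - b) + ∑ b ∈ B, b = (N - 1) * B.card := by
    rw [← Finset.sum_add_distrib]
    have : ∀ b ∈ B, (N - 1 - b) + b = N - 1 := fun b hb => by have := hB b hb; omega
    rw [Finset.sum_congr rfl this, Finset.sum_const, smul_eq_mul, Nat.mul_comm]
  have hYcard : (L ∪ R).card = A.card + (N - B.card) := by
    rw [card_union_of_disjoint hdisj, hcardL, hcardR]
  have hYsum : ∑ y ∈ L ∪ R, y = (N * A.card + ∑ a ∈ A, a)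
      + ∑ b ∈ (range N).filter (fun b => b ∉ B), (N - 1 - b) := by
    rw [Finset.sum_union hdisj, hsumL, hsumR]
  have hpbs := pbs_sum (L ∪ R)
  have hBcard_le : B.card ≤ N := by
    have := card_le_card hBsub
    rwa [card_range] at this
  have hYcard' : (L ∪ R).card + B.card = A.card + N := by omega
  -- move to ℤ
  have e1 : ((partitionOfBetaSet (L ∪ R)).sum : ℤ) + ((L ∪ R).card.choose 2 : ℕ)
      = (N:ℤ) * A.card + (∑ a ∈ A, a : ℕ) + (∑ b ∈ (range N).filter (fun b => b ∉ B), (N - 1 - b) : ℕ) := by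
    rw [hYsum] at hpbs
    exact_mod_cast hpbs
  have e2 : ((∑ b ∈ (range N).filter (fun b => b ∉ B), (N - 1 - b) : ℕ) : ℤ)
      + ((∑ b ∈ B, (N - 1 - b) : ℕ) : ℤ) = ((N.choose 2 : ℕ) : ℤ) := by exact_mod_cast hsplit
  have e3 : ((∑ b ∈ B, (N - 1 - b) : ℕ) : ℤ) + ((∑ b ∈ B, b : ℕ) : ℤ)
      = ((N:ℤ) - 1) * B.card := by
    have : (((N - 1) * B.card : ℕ) : ℤ) = ((N:ℤ) - 1) * B.card := by
      push_cast [Nat.cast_sub hN]; ring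
    rw [← this]
    exact_mod_cast hBsum
  have e4 : ((psize A : ℕ) : ℤ) + ((A.card.choose 2 : ℕ) : ℤ) = ((∑ a ∈ A, a : ℕ) : ℤ) := by
    exact_mod_cast psize_add A
  have e5 : ((psize B : ℕ) : ℤ) + ((B.card.choose 2 : ℕ) : ℤ) = ((∑ b ∈ B, b : ℕ) : ℤ) := by
    exact_mod_cast psize_add B
  have e10 : (((L ∪ R).card : ℕ) : ℤ) + (B.card : ℤ) = (A.card : ℤ) + N := by
    exact_mod_cast hYcard'
  have e6 : 2 * (((L ∪ R).card.choose 2 : ℕ) : ℤ) + (((L ∪ R).card : ℕ) : ℤ)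
      = (((L ∪ R).card : ℕ) : ℤ) * (((L ∪ R).card : ℕ) : ℤ) := by
    exact_mod_cast two_choose ((L ∪ R).card)
  have e7 : 2 * ((A.card.choose 2 : ℕ) : ℤ) + (A.card : ℤ) = (A.card : ℤ) * A.card := by
    exact_mod_cast two_choose A.card
  have e8 : 2 * ((B.card.choose 2 : ℕ) : ℤ) + (B.card : ℤ) = (B.card : ℤ) * B.card := by
    exact_mod_cast two_choose B.card
  have e9 : 2 * ((N.choose 2 : ℕ) : ℤ) + (N : ℤ) = (N : ℤ) * N := by
    exact_mod_cast two_choose N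
  have hn : (((L ∪ R).card : ℕ) : ℤ) = (A.card : ℤ) + N - B.card := by linarith
  rw [hn] at e6
  have goalZ : 2 * ((partitionOfBetaSet (L ∪ R)).sum : ℤ)
      = 2 * (psize A : ℤ) + 2 * (psize B : ℤ) + 2 * ((A.card : ℤ) * B.card) := by
    ring_nf at e6 e7 e8 e9 ⊢
    linarith [e1, e2, e3, e4, e5, e6, e7, e8, e9]
  have goalN : 2 * (partitionOfBetaSet (L ∪ R)).sum
      = 2 * (psize A + psize B + A.card * B.card) := by
    have h2 : ((2 * (psize A + psize B + A.card * B.card) : ℕ) : ℤ)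
        = 2 * (psize A : ℤ) + 2 * (psize B : ℤ) + 2 * ((A.card : ℤ) * B.card) := by
      push_cast; ring
    have h1 : ((2 * (partitionOfBetaSet (L ∪ R)).sum : ℕ) : ℤ)
        = 2 * ((partitionOfBetaSet (L ∪ R)).sum : ℤ) := by push_cast; ring
    have := goalZ
    rw [← h1, ← h2] at this
    exact_mod_cast this
  omega
lemma quot_sum (t : Finset ℕ) (i : ℕ) :
    (barQuotComp d i t).sum
      = psize (runnerSet d i t) + psize (runnerSet d (d - i) t)
        + (runnerSet d i t).card * (runnerSet d (d - i) t).card := by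
  have hB : ∀ b ∈ runnerSet d (d - i) t, b < (runnerSet d (d - i) t).sup id + 1 :=
    fun b hb => Nat.lt_succ_of_le (Finset.le_sup (f := id) hb)
  exact union_beta_sum _ _ _ (Nat.le_add_left 1 _) hB

lemma filter_bind' {α β : Type*} (m : Multiset α) (f : α → Multiset β)
    (p : β → Prop) [DecidablePred p] :
    (m.bind f).filter p = m.bind (fun a => (f a).filter p) := by
  induction m using Multiset.induction_on with
  | empty => simp
  | cons a s ih => simp [Multiset.filter_add, ih]

lemma count1 (hd0 : 0 < d) (t : Finset ℕ) (a : ℕ) :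
    Multiset.card
      ((((Multiset.range a).map (· + 1)).filter (fun h => a - h ∉ t)).filter (fun b => d ∣ b))
    = ((range (a / d)).filter (fun y => y ∉ runnerSet d (a % d) t)).card := by
  rw [Multiset.filter_filter, Multiset.filter_map, Multiset.card_map]
  have hform : Multiset.card (Multiset.filter ((fun b => d ∣ b ∧ a - b ∉ t) ∘ (· + 1))
      (Multiset.range a))
      = ((range a).filter (fun k => d ∣ (k + 1) ∧ a - (k + 1) ∉ t)).card := rfl
  rw [hform]
  have hmod : a % d < d := Nat.mod_lt a hd0
  have hdm : d * (a / d) + a % d = a := Nat.div_add_mod a d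
  apply card_nbij' (i := fun k => (a - (k + 1)) / d)
    (j := fun y => d * (a / d - y) - 1)
  · intro k hk
    simp only [mem_coe, mem_filter, mem_range] at hk ⊢
    obtain ⟨hka, hdvd, hnot⟩ := hk
    obtain ⟨c, hc⟩ := hdvd
    have hc1 : 1 ≤ c := by nlinarith
    have hcle : c ≤ a / d := by
      rw [Nat.le_div_iff_mul_le hd0, Nat.mul_comm]
      omega
    have hkey : d * (a / d - c) + d * c = d * (a / d) := by
      rw [← Nat.mul_add]
      congr 1
      omega
    have hval : a - (k + 1) = a % d + d * (a / d - c) := by omega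
    have hdiv : (a - (k + 1)) / d = a / d - c := by
      rw [hval, decomp_div hd0 hmod]
    constructor
    · omega
    · rw [hdiv, mem_runnerSet hd0 hmod]
      rw [← hval]
      exact hnot
  · intro y hy
    simp only [mem_coe, mem_filter, mem_range] at hy ⊢
    obtain ⟨hylt, hynot⟩ := hy
    have h1 : 1 ≤ a / d - y := by omega
    have hmul : d * 1 ≤ d * (a / d - y) := Nat.mul_le_mul_left d h1
    have hk1 : d * (a / d - y) - 1 + 1 = d * (a / d - y) := by omega
    have hkey : d * (a / d - y) + d * y = d * (a / d) := by
      rw [← Nat.mul_add]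
      congr 1
      omega
    refine ⟨by omega, ⟨a / d - y, hk1⟩, ?_⟩
    have hval : a - (d * (a / d - y) - 1 + 1) = a % d + d * y := by omega
    rw [hval]
    rw [mem_runnerSet hd0 hmod] at hynot
    exact hynot
  · intro k hk
    simp only [mem_coe, mem_filter, mem_range] at hk
    obtain ⟨hka, hdvd, hnot⟩ := hk
    obtain ⟨c, hc⟩ := hdvd
    have hc1 : 1 ≤ c := by nlinarith
    have hcle : c ≤ a / d := by
      rw [Nat.le_div_iff_mul_le hd0, Nat.mul_comm]
      omega
    have hkey : d * (a / d - c) + d * c = d * (a / d) := by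
      rw [← Nat.mul_add]; congr 1; omega
    have hval : a - (k + 1) = a % d + d * (a / d - c) := by omega
    have hdiv : (a - (k + 1)) / d = a / d - c := by
      rw [hval, decomp_div hd0 hmod]
    beta_reduce
    rw [hdiv]
    have : a / d - (a / d - c) = c := by omega
    rw [this]
    omega
  · intro y hy
    simp only [mem_coe, mem_filter, mem_range] at hy
    obtain ⟨hylt, _⟩ := hy
    have h1 : 1 ≤ a / d - y := by omega
    have hmul : d * 1 ≤ d * (a / d - y) := Nat.mul_le_mul_left d h1
    have hk1 : d * (a / d - y) - 1 + 1 = d * (a / d - y) := by omega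
    have hkey : d * (a / d - y) + d * y = d * (a / d) := by
      rw [← Nat.mul_add]; congr 1; omega
    have hval : a - (d * (a / d - y) - 1 + 1) = a % d + d * y := by omega
    beta_reduce
    rw [hval, decomp_div hd0 hmod]
lemma count2 (hd0 : 0 < d) (t : Finset ℕ) (a : ℕ) :
    Multiset.card
      (((t.filter (fun b => b < a)).val.map (fun b => a + b)).filter (fun b => d ∣ b))
    = ((runnerSet d ((d - a % d) % d) t).filter
        (fun y => (d - a % d) % d + d * y < a)).card := by
  rw [Multiset.filter_map, Multiset.card_map]
  have hform : Multiset.card (Multiset.filter ((fun b => d ∣ b) ∘ (fun b => a + b))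
      (t.filter (fun b => b < a)).val)
      = ((t.filter (fun b => b < a)).filter (fun b => d ∣ (a + b))).card := rfl
  rw [hform, Finset.filter_filter]
  have hj : (d - a % d) % d < d := Nat.mod_lt _ hd0
  apply card_nbij' (i := fun b => b / d) (j := fun y => (d - a % d) % d + d * y)
  · intro b hb
    simp only [mem_coe, mem_filter] at hb ⊢
    obtain ⟨hbt, hba, hdvd⟩ := hb
    have hres : b % d = (d - a % d) % d := (respair hd0).1 hdvd
    constructor
    · rw [mem_runnerSet hd0 hj, ← hres, Nat.mod_add_div b d]
      exact hbt
    · rw [← hres, Nat.mod_add_div b d]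
      exact hba
  · intro y hy
    simp only [mem_coe, mem_filter] at hy ⊢
    obtain ⟨hmem, hlt⟩ := hy
    rw [mem_runnerSet hd0 hj] at hmem
    refine ⟨hmem, hlt, ?_⟩
    rw [respair hd0, decomp_mod hd0 hj]
  · intro b hb
    simp only [mem_coe, mem_filter] at hb
    obtain ⟨hbt, hba, hdvd⟩ := hb
    have hres : b % d = (d - a % d) % d := (respair hd0).1 hdvd
    beta_reduce
    rw [← hres, Nat.mod_add_div b d]
  · intro y hy
    exact decomp_div hd0 hj y

lemma count1_sum (hd0 : 0 < d) (t : Finset ℕ) :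
    ∑ a ∈ t, ((range (a / d)).filter (fun y => y ∉ runnerSet d (a % d) t)).card
    = ∑ i ∈ range d, psize (runnerSet d i t) := by
  rw [sum_runner hd0 t
    (fun a => ((range (a / d)).filter (fun y => y ∉ runnerSet d (a % d) t)).card)]
  refine sum_congr rfl fun i hi => ?_
  have hi' : i < d := mem_range.1 hi
  refine sum_congr rfl fun x hx => ?_
  rw [decomp_mod hd0 hi', decomp_div hd0 hi']
  have hpart := Finset.card_filter_add_card_filter_not (s := range x)
    (p := fun y => y ∈ runnerSet d i t)
  rw [card_range] at hpart
  have hfilt : (range x).filter (fun y => y ∈ runnerSet d i t)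
      = (runnerSet d i t).filter (fun y => y < x) := by
    ext y
    simp only [mem_filter, mem_range]
    tauto
  rw [hfilt] at hpart
  have : ((range x).filter (fun y => ¬ y ∈ runnerSet d i t)).card
      = x - ((runnerSet d i t).filter (fun y => y < x)).card := by omega
  exact this

lemma count2_sum (hd0 : 0 < d) (t : Finset ℕ) :
    ∑ a ∈ t, ((runnerSet d ((d - a % d) % d) t).filter
        (fun y => (d - a % d) % d + d * y < a)).card
    = ∑ i ∈ range d, ∑ x ∈ runnerSet d i t,
        ((runnerSet d ((d - i) % d) t).filter (fun y => (d - i) % d + d * y < i + d * x)).card := by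
  rw [sum_runner hd0 t (fun a => ((runnerSet d ((d - a % d) % d) t).filter
        (fun y => (d - a % d) % d + d * y < a)).card)]
  refine sum_congr rfl fun i hi => ?_
  have hi' : i < d := mem_range.1 hi
  refine sum_congr rfl fun x hx => ?_
  rw [decomp_mod hd0 hi']

lemma sum_range_odd {M : Type*} [AddCommMonoid M] (hodd : Odd d) (h3 : 3 ≤ d) (f : ℕ → M) :
    ∑ i ∈ range d, f i = f 0 + ∑ i ∈ Icc 1 ((d - 1) / 2), (f i + f (d - i)) := by
  obtain ⟨m, hm⟩ := hodd
  have hm2 : (d - 1) / 2 = m := by omega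
  rw [hm2]
  have h1 : range d = insert 0 (Icc 1 (d - 1)) := by
    ext x
    simp only [mem_range, mem_insert, mem_Icc]
    omega
  rw [h1, sum_insert (by simp)]
  congr 1
  have h2 : Icc 1 (d - 1) = Icc 1 m ∪ Icc (m + 1) (d - 1) := by
    ext x
    simp only [mem_Icc, mem_union]
    omega
  have hdisj : Disjoint (Icc 1 m) (Icc (m + 1) (d - 1)) := by
    rw [Finset.disjoint_left]
    intro x hx hy
    simp only [mem_Icc] at hx hy
    omega
  rw [h2, sum_union hdisj]
  have h3' : ∑ i ∈ Icc (m + 1) (d - 1), f i = ∑ i ∈ Icc 1 m, f (d - i) := by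
    apply Finset.sum_nbij' (i := fun x => d - x) (j := fun x => d - x)
    · intro x hx; simp only [mem_Icc] at hx ⊢; omega
    · intro x hx; simp only [mem_Icc] at hx ⊢; omega
    · intro x hx; simp only [mem_Icc] at hx; omega
    · intro x hx; simp only [mem_Icc] at hx; omega
    · intro x hx; simp only [mem_Icc] at hx; congr 1; omega
  rw [h3', ← sum_add_distrib]

lemma cross (A B : Finset ℕ) :
    ∑ x ∈ A, (B.filter (fun y => y < x)).card + ∑ y ∈ B, (A.filter (fun x => x ≤ y)).card
    = A.card * B.card := by
  have h1 : ∀ x, (B.filter (fun y => y < x)).card = ∑ y ∈ B, if y < x then 1 else 0 :=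
    fun x => Finset.card_filter _ _
  have h2 : ∀ y, (A.filter (fun x => x ≤ y)).card = ∑ x ∈ A, if x ≤ y then 1 else 0 :=
    fun y => Finset.card_filter _ _
  simp only [h1, h2]
  rw [Finset.sum_comm (s := B) (t := A) (f := fun y x => if x ≤ y then 1 else 0)]
  rw [← Finset.sum_add_distrib]
  have : ∀ x ∈ A, (∑ y ∈ B, if y < x then 1 else 0) + (∑ y ∈ B, if x ≤ y then 1 else 0)
      = B.card := by
    intro x _
    rw [← Finset.sum_add_distrib]
    have : ∀ y ∈ B, ((if y < x then 1 else 0) + (if x ≤ y then 1 else 0)) = 1 := by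
      intro y _
      rcases lt_or_ge y x with h | h
      · rw [if_pos h, if_neg (by omega)]
      · rw [if_neg (by omega), if_pos h]
    rw [Finset.sum_congr rfl this, Finset.sum_const, smul_eq_mul, Nat.mul_one]
  rw [Finset.sum_congr rfl this, Finset.sum_const, smul_eq_mul]
lemma cond1 {m i : ℕ} (hm : d = 2 * m + 1) (h1 : 1 ≤ i) (h2 : i ≤ m) (x y : ℕ) :
    ((d - i) + d * y < i + d * x) ↔ y < x := by
  constructor
  · intro h
    by_contra hc
    push_neg at hc
    have hmul : d * x ≤ d * y := Nat.mul_le_mul_left d hc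
    omega
  · intro h
    have hmul : d * (y + 1) ≤ d * x := Nat.mul_le_mul_left d h
    have hmul2 : d * (y + 1) = d * y + d := by ring
    omega

lemma cond2 {m i : ℕ} (hm : d = 2 * m + 1) (h1 : 1 ≤ i) (h2 : i ≤ m) (x y : ℕ) :
    (i + d * x < (d - i) + d * y) ↔ x ≤ y := by
  constructor
  · intro h
    by_contra hc
    push_neg at hc
    have hmul : d * (y + 1) ≤ d * x := Nat.mul_le_mul_left d hc
    have hmul2 : d * (y + 1) = d * y + d := by ring
    omega
  · intro h
    have hmul : d * x ≤ d * y := Nat.mul_le_mul_left d h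
    omega

lemma master (hd0 : 0 < d) (hodd : Odd d) (h3 : 3 ≤ d) (t : Finset ℕ) :
    Multiset.card ((barMultisetF t).filter (fun b => d ∣ b))
    = (∑ x ∈ runnerSet d 0 t, x)
      + ∑ i ∈ Icc 1 ((d - 1) / 2),
          (psize (runnerSet d i t) + psize (runnerSet d (d - i) t)
            + (runnerSet d i t).card * (runnerSet d (d - i) t).card) := by
  obtain ⟨m, hm⟩ := hodd
  rw [barMultisetF, Multiset.filter_add, Multiset.card_add, filter_bind', filter_bind',
    Multiset.card_bind, Multiset.card_bind]
  have hb1 : (t.val.map (Multiset.card ∘ fun a =>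
      (((Multiset.range a).map (· + 1)).filter (fun h => a - h ∉ t)).filter (fun b => d ∣ b))).sum
      = ∑ a ∈ t, ((range (a / d)).filter (fun y => y ∉ runnerSet d (a % d) t)).card := by
    refine Finset.sum_congr rfl fun a _ => ?_
    exact count1 hd0 t a
  have hb2 : (t.val.map (Multiset.card ∘ fun a =>
      ((t.filter (fun b => b < a)).val.map (fun b => a + b)).filter (fun b => d ∣ b))).sum
      = ∑ a ∈ t, ((runnerSet d ((d - a % d) % d) t).filter
          (fun y => (d - a % d) % d + d * y < a)).card := by
    refine Finset.sum_congr rfl fun a _ => ?_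
    exact count2 hd0 t a
  rw [hb1, hb2, count1_sum hd0 t, count2_sum hd0 t, ← Finset.sum_add_distrib,
    sum_range_odd ⟨m, hm⟩ h3 (fun i => psize (runnerSet d i t)
      + ∑ x ∈ runnerSet d i t,
          ((runnerSet d ((d - i) % d) t).filter
            (fun y => (d - i) % d + d * y < i + d * x)).card)]
  congr 1
  · -- runner 0
    rw [Nat.sub_zero, Nat.mod_self]
    have hfc : ∀ x ∈ runnerSet d 0 t,
        ((runnerSet d 0 t).filter (fun y => 0 + d * y < 0 + d * x)).card
        = ((runnerSet d 0 t).filter (fun y => y < x)).card := by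
      intro x _
      congr 1
      apply Finset.filter_congr
      intro y _
      simp only [Nat.zero_add, eq_iff_iff]
      exact Nat.mul_lt_mul_left hd0
    rw [Finset.sum_congr rfl hfc, lowsum]
    exact psize_add (runnerSet d 0 t)
  · refine Finset.sum_congr rfl fun i hi => ?_
    simp only [mem_Icc] at hi
    have hm2 : (d - 1) / 2 = m := by omega
    have hi1 : 1 ≤ i := hi.1
    have him : i ≤ m := by omega
    have hdi : (d - i) % d = d - i := Nat.mod_eq_of_lt (by omega)
    have hddi : (d - (d - i)) % d = i := by
      have : d - (d - i) = i := by omega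
      rw [this, Nat.mod_eq_of_lt (by omega)]
    rw [hdi, hddi]
    have hc1 : ∀ x ∈ runnerSet d i t,
        ((runnerSet d (d - i) t).filter (fun y => (d - i) + d * y < i + d * x)).card
        = ((runnerSet d (d - i) t).filter (fun y => y < x)).card := by
      intro x _
      congr 1
      apply Finset.filter_congr
      intro y _
      exact cond1 hm hi1 him x y
    have hc2 : ∀ y ∈ runnerSet d (d - i) t,
        ((runnerSet d i t).filter (fun x => i + d * x < (d - i) + d * y)).card
        = ((runnerSet d i t).filter (fun x => x ≤ y)).card := by
      intro y _
      congr 1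
      apply Finset.filter_congr
      intro x _
      exact cond2 hm hi1 him x y
    rw [Finset.sum_congr rfl hc1, Finset.sum_congr rfl hc2]
    have := cross (runnerSet d i t) (runnerSet d (d - i) t)
    omega

lemma pairsum (hd0 : 0 < d) {i : ℕ} (hi1 : 1 ≤ i) (hi : i < d) (A B : Finset ℕ)
    (hcard : A.card = B.card) :
    d * (psize A + psize B + A.card * B.card)
    = (∑ x ∈ A, (i + d * x)) + (∑ y ∈ B, ((d - i) + d * y)) := by
  have hsumA : ∑ x ∈ A, (i + d * x) = i * B.card + d * ∑ x ∈ A, x := by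
    rw [Finset.sum_add_distrib, Finset.sum_const, smul_eq_mul, ← Finset.mul_sum, hcard]
    ring
  have hsumB : ∑ y ∈ B, ((d - i) + d * y) = (d - i) * B.card + d * ∑ y ∈ B, y := by
    rw [Finset.sum_add_distrib, Finset.sum_const, smul_eq_mul, ← Finset.mul_sum]
    ring
  rw [hsumA, hsumB, hcard]
  have e1 : psize A + B.card.choose 2 = ∑ x ∈ A, x := by
    rw [← hcard]; exact psize_add A
  have e2 : psize B + B.card.choose 2 = ∑ y ∈ B, y := psize_add B
  have e3 : 2 * B.card.choose 2 + B.card = B.card * B.card := two_choose B.card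
  have e4 : i * B.card + (d - i) * B.card = d * B.card := by
    rw [← Nat.add_mul]
    congr 1
    omega
  have e5 : d * (psize A + psize B + B.card * B.card)
      = d * psize A + d * psize B + d * (B.card * B.card) := by ring
  have e6 : d * (∑ x ∈ A, x) = d * psize A + d * B.card.choose 2 := by
    rw [← e1, Nat.mul_add]
  have e7 : d * (∑ y ∈ B, y) = d * psize B + d * B.card.choose 2 := by
    rw [← e2, Nat.mul_add]
  have e8 : d * (B.card * B.card) = 2 * (d * B.card.choose 2) + d * B.card := by
    rw [← e3]; ring
  omega
/-- `d` times the number of bar lengths of `λ` divisible by `d` equals the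
size of the `d̄`-quotient partition. -/
theorem card_divisible_bars (d : ℕ) (hd : Odd d) (h3 : 3 ≤ d) (s q : Finset ℕ)
    (hs : 0 ∉ s) (hq : IsBarQuotientPartition d s q) :
    d * Multiset.card ((barMultisetF s).filter (fun b => d ∣ b)) = q.sum id := by
  have hd0 : 0 < d := by omega
  obtain ⟨hcore, h0run, hcomp⟩ := hq
  have hpair : ∀ i ∈ Icc 1 ((d - 1) / 2),
      (psize (runnerSet d i s) + psize (runnerSet d (d - i) s)
        + (runnerSet d i s).card * (runnerSet d (d - i) s).card)
      = (psize (runnerSet d i q) + psize (runnerSet d (d - i) q)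
        + (runnerSet d i q).card * (runnerSet d (d - i) q).card) := by
    intro i hi
    simp only [mem_Icc] at hi
    rw [← quot_sum, ← quot_sum, hcomp i hi.1 hi.2]
  have hcard : ∀ i ∈ Icc 1 ((d - 1) / 2),
      (runnerSet d i q).card = (runnerSet d (d - i) q).card := by
    intro i hi
    simp only [mem_Icc] at hi
    have hinv := invar_chain hd0 hd hcore.1 hi.1 hi.2
    have h1 : nres d i (∅ : Finset ℕ) = 0 := by simp [nres]
    have h2 : nres d (d - i) (∅ : Finset ℕ) = 0 := by simp [nres]
    rw [h1, h2] at hinv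
    rw [card_runnerSet, card_runnerSet]
    have : (nres d i q : ℤ) = (nres d (d - i) q : ℤ) := by
      push_cast at hinv
      omega
    exact_mod_cast this
  calc d * Multiset.card ((barMultisetF s).filter (fun b => d ∣ b))
      = d * ((∑ x ∈ runnerSet d 0 s, x)
          + ∑ i ∈ Icc 1 ((d - 1) / 2),
              (psize (runnerSet d i s) + psize (runnerSet d (d - i) s)
                + (runnerSet d i s).card * (runnerSet d (d - i) s).card)) := by
        rw [master hd0 hd h3 s]
    _ = d * ((∑ x ∈ runnerSet d 0 q, x)
          + ∑ i ∈ Icc 1 ((d - 1) / 2),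
              (psize (runnerSet d i q) + psize (runnerSet d (d - i) q)
                + (runnerSet d i q).card * (runnerSet d (d - i) q).card)) := by
        rw [h0run, Finset.sum_congr rfl hpair]
    _ = (∑ x ∈ runnerSet d 0 q, (0 + d * x))
          + ∑ i ∈ Icc 1 ((d - 1) / 2),
              ((∑ x ∈ runnerSet d i q, (i + d * x))
                + (∑ y ∈ runnerSet d (d - i) q, ((d - i) + d * y))) := by
        rw [Nat.mul_add, Finset.mul_sum, Finset.mul_sum]
        congr 1
        · refine Finset.sum_congr rfl fun x _ => ?_
          omega
        · refine Finset.sum_congr rfl fun i hi => ?_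
          simp only [mem_Icc] at hi
          exact pairsum hd0 hi.1 (by omega) _ _ (hcard i (by simp only [mem_Icc]; omega))
    _ = ∑ i ∈ range d, ∑ x ∈ runnerSet d i q, (i + d * x) :=
        (sum_range_odd hd h3 (fun i => ∑ x ∈ runnerSet d i q, (i + d * x))).symm
    _ = q.sum id := by
        have := sum_runner hd0 q id
        simp only [id] at this
        rw [← this]
        rfl

end BarPartitions
end

section
/- Let d ≥ 3 be odd and λ a strict partition. The modified part lengths of the d̄-quotient partition q̄_d(λ) are pairwise distinct: if z, z' are distinct parts of q̄_d(λ) with d-residues i and j respectively, then |z + d(x_i - x_0)| ≠ |z' + d(x_j - x_0)|, where x_i are bead counts on the minimally normalized d-abacus of D(λ). -/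
namespace BarPartitions

/-! ### Auxiliary lemmas for the proof -/


lemma length_filter_range (n : ℕ) (p : ℕ → Prop) [DecidablePred p] :
    ((List.range n).filter (fun c => p c)).length = ((Finset.range n).filter p).card := by
  rw [Finset.card_filter, ← List.countP_eq_length_filter]
  induction n with
  | zero => simp
  | succ n ih =>
    rw [List.range_succ, Finset.sum_range_succ, List.countP_append, ih]
    by_cases h : p n <;> simp [List.countP, List.countP.go, h]

lemma downclosed_eq_range (F : Finset ℕ) (h : ∀ a b, a ≤ b → b ∈ F → a ∈ F) :
    F = Finset.range F.card := by
  have hsub : F ⊆ Finset.range F.card := by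
    intro k hk
    have : Finset.range (k + 1) ⊆ F := by
      intro a ha
      exact h a k (by simpa using Nat.lt_succ_iff.mp (Finset.mem_range.mp ha)) hk
    have := Finset.card_le_card this
    simp only [Finset.card_range] at this
    exact Finset.mem_range.mpr this
  exact Finset.eq_of_subset_of_card_le hsub (by simp)

section SP
variable (s : Finset ℕ)

lemma mem_sortedParts {a : ℕ} : a ∈ sortedParts s ↔ a ∈ s := by
  simp [sortedParts]

lemma length_sortedParts : (sortedParts s).length = s.card := by
  simp [sortedParts]

lemma sortedParts_pairwise : (sortedParts s).Pairwise (· > ·) := by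
  rw [sortedParts, List.pairwise_reverse]
  exact (Finset.sortedLT_sort s).pairwise

lemma sp_getD_anti {k1 k2 : ℕ} (h : k1 < k2) (h2 : k2 < (sortedParts s).length) :
    (sortedParts s).getD k2 0 < (sortedParts s).getD k1 0 := by
  have h1 : k1 < (sortedParts s).length := h.trans h2
  rw [List.getD_eq_getElem _ _ h1, List.getD_eq_getElem _ _ h2]
  exact List.pairwise_iff_getElem.mp (sortedParts_pairwise s) k1 k2 h1 h2 h

lemma sp_getD_mem {k : ℕ} (h : k < (sortedParts s).length) :
    (sortedParts s).getD k 0 ∈ s := by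
  rw [← mem_sortedParts, List.getD_eq_getElem _ _ h]
  exact List.getElem_mem _

lemma sp_headD_getD : (sortedParts s).headD 0 = (sortedParts s).getD 0 0 := by
  cases sortedParts s <;> simp

lemma sp_getD_add_le {a b : ℕ} (hab : a ≤ b) (hb : b < (sortedParts s).length) :
    (sortedParts s).getD b 0 + b ≤ (sortedParts s).getD a 0 + a := by
  induction b with
  | zero => interval_cases a; omega
  | succ n ih =>
    rcases Nat.eq_or_lt_of_le hab with rfl | hlt
    · omega
    · have h1 : (sortedParts s).getD (n+1) 0 < (sortedParts s).getD n 0 :=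
        sp_getD_anti s (by omega) hb
      have := ih (by omega) (by omega)
      omega

lemma sp_le_headD {a : ℕ} (ha : a ∈ s) : a ≤ (sortedParts s).headD 0 := by
  obtain ⟨k, hk, hEq⟩ := List.getElem_of_mem ((mem_sortedParts s).mpr ha)
  have h2 : (sortedParts s).getD k 0 = a := by
    rw [List.getD_eq_getElem _ _ hk]; exact hEq
  have h3 := sp_getD_add_le s (Nat.zero_le k) hk
  rw [sp_headD_getD]
  omega

lemma sp_card_le_headD (hs : 0 ∉ s) : s.card ≤ (sortedParts s).headD 0 := by
  rcases Nat.eq_zero_or_pos s.card with h0 | h0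
  · omega
  · have hk : s.card - 1 < (sortedParts s).length := by rw [length_sortedParts]; omega
    have h1 := sp_getD_add_le s (Nat.zero_le (s.card - 1)) hk
    have h2 : 0 < (sortedParts s).getD (s.card - 1) 0 := by
      rcases Nat.eq_zero_or_pos ((sortedParts s).getD (s.card - 1) 0) with h | h
      · exact absurd (h ▸ sp_getD_mem s hk) hs
      · exact h
    rw [sp_headD_getD]
    omega

lemma sp_exists {a : ℕ} (ha : a ∈ s) :
    ∃ k < s.card, (sortedParts s).getD k 0 = a := by
  obtain ⟨k, hk, hEq⟩ := List.getElem_of_mem ((mem_sortedParts s).mpr ha)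
  refine ⟨k, by rwa [length_sortedParts] at hk, ?_⟩
  rw [List.getD_eq_getElem _ _ hk]; exact hEq

end SP

/-! ### doubledP structure -/

section DP
variable (s : Finset ℕ)

/-- number of columns `c < s.card` with `c + l c ≥ j` -/
def W (j : ℕ) : ℕ :=
  ((Finset.range s.card).filter (fun c => j ≤ c + (sortedParts s).getD c 0)).card

lemma W_le (j : ℕ) : W s j ≤ s.card := by
  calc W s j ≤ (Finset.range s.card).card := Finset.card_filter_le _ _
  _ = s.card := Finset.card_range _

lemma W_anti {j j' : ℕ} (h : j ≤ j') : W s j' ≤ W s j := by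
  apply Finset.card_le_card
  intro c hc
  simp only [Finset.mem_filter, Finset.mem_range] at hc ⊢
  omega

lemma W_mem_iff {j c : ℕ} (hc : c < s.card) :
    j ≤ c + (sortedParts s).getD c 0 ↔ c < W s j := by
  have hdc : ((Finset.range s.card).filter (fun c => j ≤ c + (sortedParts s).getD c 0))
      = Finset.range (W s j) := by
    apply downclosed_eq_range
    intro a b hab hb
    simp only [Finset.mem_filter, Finset.mem_range] at hb ⊢
    refine ⟨by omega, ?_⟩
    rcases Nat.eq_or_lt_of_le hab with rfl | hlt
    · exact hb.2
    · have := sp_getD_add_le s (le_of_lt hlt) (by rw [length_sortedParts]; exact hb.1)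
      omega
  constructor
  · intro h
    have : c ∈ (Finset.range s.card).filter (fun c => j ≤ c + (sortedParts s).getD c 0) := by
      simp only [Finset.mem_filter, Finset.mem_range]; exact ⟨hc, h⟩
    rw [hdc] at this
    exact Finset.mem_range.mp this
  · intro h
    have : c ∈ Finset.range (W s j) := Finset.mem_range.mpr h
    rw [← hdc] at this
    simp only [Finset.mem_filter] at this
    exact this.2

lemma doubledP_length (hs : 0 ∉ s) :
    (doubledP (sortedParts s)).length = (sortedParts s).headD 0 := by
  have := sp_card_le_headD s hs
  simp only [doubledP, List.length_append, List.length_map, List.length_range,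
    length_sortedParts]
  omega

lemma doubledP_getD_lo {k : ℕ} (hk : k < s.card) :
    (doubledP (sortedParts s)).getD k 0 = (sortedParts s).getD k 0 + k + 1 := by
  rw [doubledP, List.getD_append _ _ _ _ (by simpa [length_sortedParts] using hk)]
  have hk' : k < (List.range (sortedParts s).length).length := by
    simpa [length_sortedParts] using hk
  rw [List.getD_eq_getElem _ _ (by simpa using hk')]
  simp

lemma doubledP_getD_mid {k : ℕ} (hk : s.card ≤ k) (hk2 : k < (sortedParts s).headD 0) :
    (doubledP (sortedParts s)).getD k 0 = W s (k + 1) := by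
  rw [doubledP, List.getD_append_right _ _ _ _ (by simpa [length_sortedParts] using hk)]
  have hlen : (List.range (sortedParts s).length).length = s.card := by
    simp [length_sortedParts]
  rw [List.length_map, hlen]
  have hkm : k - s.card < (sortedParts s).headD 0 - (sortedParts s).length := by
    rw [length_sortedParts]; omega
  rw [List.getD_eq_getElem _ _ (by simpa using hkm)]
  simp only [List.getElem_map, List.getElem_range]
  rw [length_sortedParts, W, ← length_filter_range]
  congr 1
  apply List.filter_congr
  intro c _
  simp only [decide_eq_decide]
  omega

lemma doubledP_getD_hi (hs : 0 ∉ s) {k : ℕ} (hk : (sortedParts s).headD 0 ≤ k) :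
    (doubledP (sortedParts s)).getD k 0 = 0 := by
  apply List.getD_eq_default
  rw [doubledP_length s hs]
  omega

lemma phi_notin (_hs : 0 ∉ s) {j : ℕ} (hj1 : s.card < j) : j - W s j ∉ s := by
  intro hmem
  obtain ⟨c, hc, hEq⟩ := sp_exists s hmem
  have hiff := W_mem_iff s (j := j) hc
  rw [hEq] at hiff
  have hWle := W_le s j
  rcases Nat.lt_or_ge c (W s j) with h | h
  · have := hiff.mpr h
    omega
  · have := hiff.mp (by omega)
    omega

lemma phi_image (hs : 0 ∉ s) :
    (Finset.Ico (s.card + 1) ((sortedParts s).headD 0 + 1)).image (fun j => j - W s j)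
      = (Finset.Icc 1 ((sortedParts s).headD 0)).filter (fun t => t ∉ s) := by
  have hma := sp_card_le_headD s hs
  have hsub : (Finset.Ico (s.card + 1) ((sortedParts s).headD 0 + 1)).image (fun j => j - W s j)
      ⊆ (Finset.Icc 1 ((sortedParts s).headD 0)).filter (fun t => t ∉ s) := by
    intro t ht
    simp only [Finset.mem_image, Finset.mem_Ico] at ht
    obtain ⟨j, ⟨hj1, hj2⟩, rfl⟩ := ht
    have hWle := W_le s j
    simp only [Finset.mem_filter, Finset.mem_Icc]
    exact ⟨⟨by omega, by omega⟩, phi_notin s hs (by omega)⟩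
  have hinj : Set.InjOn (fun j => j - W s j)
      (Finset.Ico (s.card + 1) ((sortedParts s).headD 0 + 1)) := by
    intro j hj j' hj' hEq
    simp only [Finset.mem_coe, Finset.mem_Ico] at hj hj'
    simp only at hEq
    rcases lt_trichotomy j j' with h | h | h
    · have h1 := W_anti s h.le
      have h2 := W_le s j
      omega
    · exact h
    · have h1 := W_anti s h.le
      have h2 := W_le s j'
      omega
  have hc1 : ((Finset.Ico (s.card + 1) ((sortedParts s).headD 0 + 1)).image
      (fun j => j - W s j)).card = (sortedParts s).headD 0 - s.card := by
    rw [Finset.card_image_of_injOn hinj, Nat.card_Ico]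
    omega
  have hfs : (Finset.Icc 1 ((sortedParts s).headD 0)).filter (fun t => t ∈ s) = s := by
    ext t
    simp only [Finset.mem_filter, Finset.mem_Icc]
    constructor
    · exact fun h => h.2
    · intro h
      refine ⟨⟨?_, sp_le_headD s h⟩, h⟩
      rcases Nat.eq_zero_or_pos t with rfl | h1
      · exact absurd h hs
      · exact h1
  have hc2 := Finset.card_filter_add_card_filter_not
      (s := Finset.Icc 1 ((sortedParts s).headD 0)) (p := fun t => t ∈ s)
  rw [hfs, Nat.card_Icc] at hc2
  exact Finset.eq_of_subset_of_card_le hsub (by omega)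

end DP

/-! ### bead counts -/

lemma minMul_le {d : ℕ} (hd : 0 < d) (len : ℕ) : len ≤ minMul d len := by
  have h1 : (len + d - 1) % d < d := Nat.mod_lt _ hd
  have h2 := Nat.div_add_mod (len + d - 1) d
  unfold minMul
  omega

lemma dvd_minMul (d len : ℕ) : d ∣ minMul d len := ⟨_, rfl⟩

lemma mod_add_multiple {d N a : ℕ} (h : d ∣ N) : (N + a) % d = a % d := by
  obtain ⟨c, rfl⟩ := h
  rw [Nat.add_comm, Nat.add_mul_mod_self_left]

lemma residue_count {d : ℕ} (hd : 0 < d) (i : ℕ) (hi : i < d) (t : ℕ) :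
    ((Finset.range (d * t)).filter (fun b => b % d = i)).card = t := by
  induction t with
  | zero => simp
  | succ t ih =>
    have hsplit : Finset.range (d * (t + 1)) =
        Finset.range (d * t) ∪ Finset.Ico (d * t) (d * (t + 1)) := by
      rw [Finset.range_eq_Ico, Finset.range_eq_Ico]
      exact (Finset.Ico_union_Ico_eq_Ico (a := 0) (b := d * t) (c := d * (t + 1)) (Nat.zero_le _) (by nlinarith)).symm
    have hdisj : Disjoint ((Finset.range (d * t)).filter (fun b => b % d = i))
        ((Finset.Ico (d * t) (d * (t + 1))).filter (fun b => b % d = i)) := by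
      apply Finset.disjoint_filter_filter
      rw [Finset.range_eq_Ico]
      exact Finset.Ico_disjoint_Ico_consecutive _ _ _
    rw [hsplit, Finset.filter_union, Finset.card_union_of_disjoint hdisj, ih]
    have hone : (Finset.Ico (d * t) (d * (t + 1))).filter (fun b => b % d = i)
        = {d * t + i} := by
      ext b
      simp only [Finset.mem_filter, Finset.mem_Ico, Finset.mem_singleton]
      constructor
      · rintro ⟨⟨h1, h2⟩, h3⟩
        have hr : b = d * t + (b - d * t) := by omega
        rw [hr, Nat.mul_add_mod] at h3
        have : b - d * t < d := by nlinarith [Nat.mul_succ d t]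
        rw [Nat.mod_eq_of_lt this] at h3
        omega
      · rintro rfl
        refine ⟨⟨by omega, by nlinarith [Nat.mul_succ d t]⟩, ?_⟩
        rw [Nat.mul_add_mod, Nat.mod_eq_of_lt hi]
    rw [hone]
    simp

lemma residue_count' {d : ℕ} (hd : 0 < d) (i N : ℕ) (hi : i < d) (hN : d ∣ N) :
    ((Finset.range N).filter (fun b => b % d = i)).card = N / d := by
  obtain ⟨c, rfl⟩ := hN
  rw [residue_count hd i hi c, Nat.mul_div_cancel_left _ hd]

section Bead
variable (d : ℕ) (s : Finset ℕ)

lemma beadCount_card (hd : 0 < d) (hs : 0 ∉ s) (i : ℕ) :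
    beadCountL d (doubledP (sortedParts s)) i
      = ((Finset.range (minMul d ((sortedParts s).headD 0))).filter
          (fun k => ((doubledP (sortedParts s)).getD k 0
            + (minMul d ((sortedParts s).headD 0) - 1 - k)) % d = i)).card := by
  rw [beadCountL, doubledP_length s hs, betaList, ← List.countP_eq_length_filter,
    List.countP_map]
  simp only [Function.comp_def]
  rw [List.countP_eq_length_filter, length_filter_range]

lemma X_eq (hd : 0 < d) (hs : 0 ∉ s) (i : ℕ) :
    beadCountL d (doubledP (sortedParts s)) i
      = (s.filter (fun a => a % d = i)).card
        + ((Finset.range (minMul d ((sortedParts s).headD 0))).filter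
            (fun b => b % d = i ∧ minMul d ((sortedParts s).headD 0) - b ∉ s)).card := by
  classical
  rw [beadCount_card d s hd hs i]
  set a1 := (sortedParts s).headD 0 with ha1
  set N := minMul d a1 with hN
  set m := s.card with hm
  have hma : m ≤ a1 := sp_card_le_headD s hs
  have haN : a1 ≤ N := minMul_le hd a1
  have hdvd : d ∣ N := dvd_minMul d a1
  set f : ℕ → ℕ := fun k => (doubledP (sortedParts s)).getD k 0 + (N - 1 - k) with hf
  show ((Finset.range N).filter (fun k => f k % d = i)).card = _
  -- pointwise descriptions of f
  have hflo : ∀ k, k < m → f k = N + (sortedParts s).getD k 0 := by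
    intro k hk
    have h1 := doubledP_getD_lo s hk
    simp only [hf]
    omega
  have hfmid : ∀ k, m ≤ k → k < a1 → f k + (k + 1 - W s (k + 1)) = N := by
    intro k hk1 hk2
    have h1 := doubledP_getD_mid s hk1 hk2
    have h2 := W_le s (k + 1)
    simp only [hf]
    omega
  have hfhi : ∀ k, a1 ≤ k → k < N → f k + k + 1 = N := by
    intro k hk1 hk2
    have h1 := doubledP_getD_hi s hs hk1
    simp only [hf]
    omega
  have hWle : ∀ j, W s j ≤ m := W_le s
  have hle_a1 : ∀ a, a ∈ s → a ≤ a1 := fun a ha => sp_le_headD s ha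
  -- split the range
  have hLHS : ((Finset.range N).filter (fun k => f k % d = i)).card
      = ((Finset.Ico 0 m).filter (fun k => f k % d = i)).card
        + ((Finset.Ico m N).filter (fun k => f k % d = i)).card := by
    have hsplit : Finset.range N = Finset.Ico 0 m ∪ Finset.Ico m N := by
      rw [Finset.range_eq_Ico]
      exact (Finset.Ico_union_Ico_eq_Ico (Nat.zero_le _) (by omega)).symm
    rw [hsplit, Finset.filter_union, Finset.card_union_of_disjoint]
    apply Finset.disjoint_filter_filter
    exact Finset.Ico_disjoint_Ico_consecutive _ _ _
  rw [hLHS]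
  congr 1
  · -- low part: bijection with parts of s
    apply Finset.card_bij (fun k _ => (sortedParts s).getD k 0)
    · intro k hk
      simp only [Finset.mem_filter, Finset.mem_Ico] at hk
      obtain ⟨⟨_, hk1⟩, hk2⟩ := hk
      have hkl : k < (sortedParts s).length := by rw [length_sortedParts]; exact hk1
      simp only [Finset.mem_filter]
      refine ⟨sp_getD_mem s hkl, ?_⟩
      rw [← mod_add_multiple hdvd, ← hflo k hk1]
      exact hk2
    · intro k hk k' hk' heq
      simp only [Finset.mem_filter, Finset.mem_Ico] at hk hk'
      rcases lt_trichotomy k k' with h | h | h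
      · have := sp_getD_anti s h (by rw [length_sortedParts]; exact hk'.1.2)
        omega
      · exact h
      · have := sp_getD_anti s h (by rw [length_sortedParts]; exact hk.1.2)
        omega
    · intro a ha
      simp only [Finset.mem_filter] at ha
      obtain ⟨k, hk, hkeq⟩ := sp_exists s ha.1
      refine ⟨k, ?_, hkeq⟩
      simp only [Finset.mem_filter, Finset.mem_Ico]
      refine ⟨⟨Nat.zero_le _, hk⟩, ?_⟩
      rw [hflo k hk, hkeq, mod_add_multiple hdvd]
      exact ha.2
  · -- high part: bijection with non-parts positions
    apply Finset.card_bij (fun k _ => f k)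
    · intro k hk
      simp only [Finset.mem_filter, Finset.mem_Ico] at hk
      obtain ⟨⟨hk1, hk2⟩, hk3⟩ := hk
      simp only [Finset.mem_filter, Finset.mem_range]
      rcases lt_or_ge k a1 with h | h
      · have e1 := hfmid k hk1 h
        have e2 := hWle (k + 1)
        refine ⟨by omega, hk3, ?_⟩
        have h3 : N - f k = k + 1 - W s (k + 1) := by omega
        rw [h3]
        exact phi_notin s hs (j := k + 1) (by omega)
      · have e1 := hfhi k h hk2
        refine ⟨by omega, hk3, ?_⟩
        have h3 : N - f k = k + 1 := by omega
        rw [h3]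
        intro hmem
        exact absurd (hle_a1 _ hmem) (by omega)
    · intro k hk k' hk' heq
      simp only [Finset.mem_filter, Finset.mem_Ico] at hk hk'
      rcases lt_or_ge k a1 with h | h <;> rcases lt_or_ge k' a1 with h' | h'
      · have e1 := hfmid k hk.1.1 h
        have e2 := hfmid k' hk'.1.1 h'
        have e3 := hWle (k + 1)
        have e4 := hWle (k' + 1)
        rcases lt_trichotomy k k' with hlt | hlt | hlt
        · have := W_anti s (show k + 1 ≤ k' + 1 by omega)
          omega
        · exact hlt
        · have := W_anti s (show k' + 1 ≤ k + 1 by omega)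
          omega
      · have e1 := hfmid k hk.1.1 h
        have e2 := hfhi k' h' hk'.1.2
        have e3 := hWle (k + 1)
        omega
      · have e1 := hfhi k h hk.1.2
        have e2 := hfmid k' hk'.1.1 h'
        have e3 := hWle (k' + 1)
        omega
      · have e1 := hfhi k h hk.1.2
        have e2 := hfhi k' h' hk'.1.2
        omega
    · intro b hb
      simp only [Finset.mem_filter, Finset.mem_range] at hb
      obtain ⟨hb1, hb2, hb3⟩ := hb
      rcases le_or_gt (b + a1 + 1) N with hcase | hcase
      · have e1 := hfhi (N - 1 - b) (by omega) (by omega)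
        refine ⟨N - 1 - b, ?_, by omega⟩
        simp only [Finset.mem_filter, Finset.mem_Ico]
        refine ⟨⟨by omega, by omega⟩, ?_⟩
        have h3 : f (N - 1 - b) = b := by omega
        rw [h3]
        exact hb2
      · have ht : N - b ∈ (Finset.Icc 1 a1).filter (fun t => t ∉ s) := by
          simp only [Finset.mem_filter, Finset.mem_Icc]
          exact ⟨⟨by omega, by omega⟩, hb3⟩
        rw [← phi_image s hs] at ht
        simp only [Finset.mem_image, Finset.mem_Ico] at ht
        obtain ⟨j, ⟨hj1, hj2⟩, hjeq⟩ := ht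
        have hWj := hWle j
        have e1 := hfmid (j - 1) (by omega) (by omega)
        have hj3 : j - 1 + 1 = j := by omega
        rw [hj3] at e1
        have h3 : f (j - 1) = b := by omega
        refine ⟨j - 1, ?_, h3⟩
        simp only [Finset.mem_filter, Finset.mem_Ico]
        exact ⟨⟨by omega, by omega⟩, by rw [h3]; exact hb2⟩

lemma bead_symm (hd : 0 < d) (hs : 0 ∉ s) (i : ℕ) (hi1 : 0 < i) (hi2 : i < d) :
    beadCountL d (doubledP (sortedParts s)) i + beadCountL d (doubledP (sortedParts s)) (d - i)
      = 2 * beadCountL d (doubledP (sortedParts s)) 0 := by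
  classical
  set a1 := (sortedParts s).headD 0 with ha1
  set N := minMul d a1 with hN
  have haN : a1 ≤ N := minMul_le hd a1
  have hdvd : d ∣ N := dvd_minMul d a1
  have hle_N : ∀ a, a ∈ s → a ≤ N := fun a ha => le_trans (sp_le_headD s ha) haN
  have hpos : ∀ a, a ∈ s → 0 < a := by
    intro a ha
    rcases Nat.eq_zero_or_pos a with rfl | h
    · exact absurd ha hs
    · exact h
  have hbij : ∀ j, ((Finset.range N).filter (fun b => b % d = j ∧ N - b ∈ s)).card
      = (s.filter (fun a => (N - a) % d = j)).card := by
    intro j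
    apply Finset.card_nbij' (fun b => N - b) (fun a => N - a)
    · intro b hbm
      simp only [Finset.mem_coe, Finset.mem_filter, Finset.mem_range] at hbm ⊢
      obtain ⟨h1, h2, h3⟩ := hbm
      refine ⟨h3, ?_⟩
      have h4 : N - (N - b) = b := by omega
      rw [h4]
      exact h2
    · intro a ham
      simp only [Finset.mem_coe, Finset.mem_filter, Finset.mem_range] at ham ⊢
      obtain ⟨h1, h2⟩ := ham
      have h3 := hle_N a h1
      have h4 := hpos a h1
      have h5 : N - (N - a) = a := by omega
      exact ⟨by omega, h2, by rw [h5]; exact h1⟩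
    · intro b hbm
      simp only [Finset.mem_coe, Finset.mem_filter, Finset.mem_range] at hbm
      beta_reduce
      omega
    · intro a ham
      simp only [Finset.mem_coe, Finset.mem_filter] at ham
      have h3 := hle_N a ham.1
      beta_reduce
      omega
  have key : ∀ j, j < d →
      beadCountL d (doubledP (sortedParts s)) j + (s.filter (fun a => (N - a) % d = j)).card
        = (s.filter (fun a => a % d = j)).card + N / d := by
    intro j hj
    rw [X_eq d s hd hs j, ← ha1, ← hN]
    have h2 := Finset.card_filter_add_card_filter_not
      (s := (Finset.range N).filter (fun b => b % d = j)) (p := fun b => N - b ∉ s)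
    simp only [Finset.filter_filter, not_not] at h2
    have h4 := residue_count' hd j N hj hdvd
    have h5 := hbij j
    omega
  have hN0 : N % d = 0 := by
    obtain ⟨c, hc⟩ := hdvd
    rw [hc]
    exact Nat.mul_mod_right _ _
  have hsum : ∀ a, a ∈ s → (N - a) % d = d ∨ (N - a) % d + a % d = 0 ∨ (N - a) % d + a % d = d := by
    intro a ha
    have h3 := hle_N a ha
    have hadd : (N - a) + a = N := by omega
    have hs2 : ((N - a) % d + a % d) % d = 0 := by
      rw [← Nat.add_mod, hadd, hN0]
    have hu := Nat.mod_lt (N - a) hd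
    have hr := Nat.mod_lt a hd
    obtain ⟨c, hc⟩ := Nat.dvd_of_mod_eq_zero hs2
    have hc2 : c ≤ 1 := by
      by_contra hcc
      have : d * 2 ≤ d * c := Nat.mul_le_mul_left d (by omega)
      omega
    interval_cases c <;> omega
  have hflip : ∀ j, 0 < j → j < d →
      s.filter (fun a => (N - a) % d = j) = s.filter (fun a => a % d = d - j) := by
    intro j hj1 hj2
    apply Finset.filter_congr
    intro a ha
    have h1 := hsum a ha
    have hu := Nat.mod_lt (N - a) hd
    have hr := Nat.mod_lt a hd
    omega
  have hflip0 : s.filter (fun a => (N - a) % d = 0) = s.filter (fun a => a % d = 0) := by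
    apply Finset.filter_congr
    intro a ha
    have h1 := hsum a ha
    have hu := Nat.mod_lt (N - a) hd
    have hr := Nat.mod_lt a hd
    omega
  have k1 := key i hi2
  have k2 := key (d - i) (by omega)
  have k0 := key 0 hd
  rw [hflip i hi1 hi2] at k1
  rw [hflip (d - i) (by omega) (by omega)] at k2
  rw [hflip0] at k0
  have hdd : d - (d - i) = i := by omega
  rw [hdd] at k2
  omega

end Bead


/-- the modified part lengths of the `d̄`-quotient partition are pairwise
distinct. -/
theorem modParts_distinct (d : ℕ) (hd : Odd d) (h3 : 3 ≤ d) (s q : Finset ℕ)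
    (hs : 0 ∉ s) (hq : IsBarQuotientPartition d s q) :
    ∀ z ∈ q, ∀ z' ∈ q, z ≠ z' →
      ((z : ℤ) + (d : ℤ) * (beadCount d s (z % d) - beadCount d s 0)).natAbs ≠
      ((z' : ℤ) + (d : ℤ) * (beadCount d s (z' % d) - beadCount d s 0)).natAbs := by
  intro z hz z' hz' hne heq
  have hd0 : 0 < d := by omega
  have hsymm : ∀ i, 0 < i → i < d →
      beadCount d s i + beadCount d s (d - i) = 2 * beadCount d s 0 := by
    intro i h1 h2
    have hb := bead_symm d s hd0 hs i h1 h2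
    unfold beadCount
    exact_mod_cast congrArg (fun n : ℕ => (n : ℤ)) hb
  have hiz := Nat.mod_lt z hd0
  have hjz := Nat.mod_lt z' hd0
  rcases Int.natAbs_eq_natAbs_iff.mp heq with h | h
  · -- same sign
    have hdvd : (d : ℤ) ∣ (z' : ℤ) - z :=
      ⟨beadCount d s (z % d) - beadCount d s (z' % d), by linear_combination -h⟩
    have hmodZ : (z : ℤ) % d = (z' : ℤ) % d := Int.modEq_iff_dvd.mpr hdvd
    have hmod : z % d = z' % d := by
      have : ((z % d : ℕ) : ℤ) = ((z' % d : ℕ) : ℤ) := by push_cast; exact hmodZ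
      exact_mod_cast this
    rw [hmod] at h
    have : (z : ℤ) = z' := by linarith
    exact hne (by exact_mod_cast this)
  · -- opposite sign
    have hzero : (z : ℤ) + z' + d * (beadCount d s (z % d) + beadCount d s (z' % d)
        - 2 * beadCount d s 0) = 0 := by linear_combination h
    have hdvd : (d : ℤ) ∣ ((z + z' : ℕ) : ℤ) :=
      ⟨-(beadCount d s (z % d) + beadCount d s (z' % d) - 2 * beadCount d s 0), by
        push_cast; linear_combination hzero⟩
    have hdvdN : d ∣ z + z' := by exact_mod_cast hdvd
    have hmod0 : (z % d + z' % d) % d = 0 := by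
      rw [← Nat.add_mod]
      exact (Nat.mod_eq_zero_of_dvd hdvdN)
    obtain ⟨c, hc⟩ := Nat.dvd_of_mod_eq_zero hmod0
    have hc2 : c ≤ 1 := by
      by_contra hcc
      have : d * 2 ≤ d * c := Nat.mul_le_mul_left d (by omega)
      omega
    rcases Nat.lt_or_ge 0 (z % d) with hzp | hzp
    · -- z % d ≥ 1, hence z % d + z' % d = d
      have hsum : z % d + z' % d = d := by
        interval_cases c <;> omega
      have hj' : z' % d = d - z % d := by omega
      rw [hj'] at hzero
      have hsy := hsymm (z % d) hzp hiz
      have h5 : (z : ℤ) + z' = 0 := by linear_combination hzero - (d : ℤ) * hsy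
      have : z = z' := by omega
      exact hne this
    · -- z % d = 0, so z' % d = 0 too
      have hz0 : z % d = 0 := by omega
      have hz0' : z' % d = 0 := by
        interval_cases c <;> omega
      rw [hz0, hz0'] at hzero
      have h5 : (z : ℤ) + z' = 0 := by linear_combination hzero
      have : z = z' := by omega
      exact hne this


end BarPartitions
end

section
/- Suppose x₀, x₁, ..., x_{d-1} are integers with d odd satisfying x_i + x_{i*} = x_j + x_{j*} for all i, j, where i* = d - i for 1 ≤ i ≤ d-1 and 0* = 0. If z, z' are positive integers with z ≡ i, z' ≡ j (mod d), 0 ≤ i, j ≤ d-1, and |z + d(x_i - x_0)| = |z' + d(x_j - x_0)|, then z = z'. -/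
namespace BarPartitions

/-- arithmetic lemma: if `x₀,…,x_{d-1}` satisfy the symmetry
`xᵢ + x_{i*} = xⱼ + x_{j*}` (`i* = (d - i) % d`), and `z, z'` are positive integers with
`|z + d(x_{z mod d} - x₀)| = |z' + d(x_{z' mod d} - x₀)|`, then `z = z'`. -/
theorem modified_abs_inj (d : ℕ) (hd : Odd d) (h3 : 3 ≤ d) (x : ℕ → ℤ)
    (hx : ∀ i < d, ∀ j < d, x i + x ((d - i) % d) = x j + x ((d - j) % d))
    (z z' : ℕ) (hz : 0 < z) (hz' : 0 < z')
    (h : ((z : ℤ) + (d : ℤ) * (x (z % d) - x 0)).natAbs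
        = ((z' : ℤ) + (d : ℤ) * (x (z' % d) - x 0)).natAbs) :
    z = z' := by
  have hd0 : 0 < d := by omega
  obtain ⟨i, hi⟩ : ∃ i, z % d = i := ⟨_, rfl⟩
  obtain ⟨j, hj⟩ : ∃ j, z' % d = j := ⟨_, rfl⟩
  rw [hi, hj] at h
  have hid : i < d := hi ▸ Nat.mod_lt _ hd0
  have hjd : j < d := hj ▸ Nat.mod_lt _ hd0
  rcases Int.natAbs_eq_natAbs_iff.mp h with heq | heq
  · -- same sign case
    have hdvd : (d : ℤ) ∣ (z' : ℤ) - (z : ℤ) := ⟨x i - x j, by linarith⟩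
    have hmod : (z : ℤ) % d = (z' : ℤ) % d := Int.modEq_iff_dvd.mpr hdvd
    have hij : i = j := by
      have h1 : ((z % d : ℕ) : ℤ) = ((z' % d : ℕ) : ℤ) := by push_cast; exact hmod
      have h2 : z % d = z' % d := by exact_mod_cast h1
      rw [hi, hj] at h2; exact h2
    rw [hij] at heq
    have : (z : ℤ) = (z' : ℤ) := by linarith
    exact_mod_cast this
  · -- opposite sign case
    have hdvd : (d : ℤ) ∣ (z : ℤ) + (z' : ℤ) := ⟨-(x i - x 0) - (x j - x 0), by linarith⟩
    have hdvdN : d ∣ z + z' := by exact_mod_cast hdvd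
    have hm : (i + j) % d = 0 := by
      rw [← hi, ← hj, ← Nat.add_mod]
      exact Nat.mod_eq_zero_of_dvd hdvdN
    have hdij : d ∣ i + j := Nat.dvd_of_mod_eq_zero hm
    obtain ⟨c, hc⟩ := hdij
    have hc2 : c < 2 := by
      by_contra hcon
      push_neg at hcon
      have : d * 2 ≤ d * c := Nat.mul_le_mul_left d hcon
      omega
    have hsum : i = 0 ∧ j = 0 ∨ i + j = d := by
      interval_cases c <;> omega
    have h2x : x i + x j = 2 * x 0 := by
      rcases hsum with ⟨h1, h2⟩ | hij
      · rw [h1, h2]; ring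
      · have hkey := hx i hid 0 (by omega)
        have e1 : (d - i) % d = j := by
          have : d - i = j := by omega
          rw [this, Nat.mod_eq_of_lt hjd]
        have e2 : (d - 0) % d = 0 := by
          rw [Nat.sub_zero, Nat.mod_self]
        rw [e1, e2] at hkey
        linarith
    have e : (d : ℤ) * (x i - x 0) + (d : ℤ) * (x j - x 0) = 0 := by
      have e0 : x i - x 0 + (x j - x 0) = 0 := by linarith
      linear_combination (d : ℤ) * e0
    have : (z : ℤ) + (z' : ℤ) = 0 := by linarith
    omega

end BarPartitions
end
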